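/- Let $A$ be a finite subset of a group $G$ and let $k > 2$ be an integer. Then $|A_3|/|A| \leq (3 |A \cdot A \cdot A|/|A|)^3$, where $A_3 = \{g_1 g_2 g_3 : g_i \in A \cup A^{-1} \cup \{1\}\}$ and $A \cdot A \cdot A = \{a b c : a, b, c \in A\}$. -/

import Mathlib

set_option maxHeartbeats 1000000

open scoped Pointwise
open Finset

private lemma tri_bound {G : Type*} [Group G] [DecidableEq G] {A : Finset G} {K : ℝ}
    (hA : (#(A ^ 3) : ℝ) ≤ K * #A) {e d f : ℤ} (he : |e| = 1) (hd : |d| = 1) (hf : |f| = 1) :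
    (#(A ^ e * A ^ d * A ^ f) : ℝ) ≤ K ^ 3 * #A := by
  have h := Finset.small_alternating_pow_of_small_tripling le_rfl hA ![e, d, f]
    (by intro i; fin_cases i <;> simpa)
  simpa [List.finRange_succ, mul_assoc] using h

private lemma tri_bound' {G : Type*} [Group G] [DecidableEq G] {A : Finset G} {K : ℝ}
    (hA₀ : A.Nonempty) (hA : (#(A ^ 3) : ℝ) ≤ K * #A)
    {e d f : ℤ} (he : e ∈ ({-1, 0, 1} : Finset ℤ)) (hd : d ∈ ({-1, 0, 1} : Finset ℤ))
    (hf : f ∈ ({-1, 0, 1} : Finset ℤ)) :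
    (#(A ^ e * A ^ d * A ^ f) : ℝ) ≤ K ^ 3 * #A := by
  have hK₁ : 1 ≤ K := by
    have h1 : (#A : ℝ) ≤ #(A ^ 3) := by
      exact_mod_cast Finset.card_le_card_pow (s := A) (n := 3) three_ne_zero
    have h2 : (0 : ℝ) < #A := by exact_mod_cast Finset.card_pos.2 hA₀
    nlinarith
  have hzne : ∀ g : ℤ, |g| = 1 → (A ^ g).Nonempty := by
    intro g hg
    rcases eq_or_eq_neg_of_abs_eq hg with rfl | rfl
    · simpa using hA₀
    · simpa using hA₀.inv
  have key : ∀ {e d f : ℤ}, |e| = 1 → |d| = 1 → |f| = 1 →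
      (#(A ^ e * A ^ d * A ^ f) : ℝ) ≤ K ^ 3 * #A := fun he hd hf => tri_bound hA he hd hf
  have lem2 : ∀ {e d : ℤ}, |e| = 1 → |d| = 1 → (#(A ^ e * A ^ d) : ℝ) ≤ K ^ 3 * #A := by
    intro e d he hd
    have h1 : (#(A ^ e * A ^ d) : ℝ) ≤ #(A ^ e * A ^ d * A ^ (1 : ℤ)) := by
      exact_mod_cast Finset.card_le_card_mul_right (hzne 1 (by norm_num))
    exact h1.trans (key he hd (by norm_num))
  have lem1 : ∀ {e : ℤ}, |e| = 1 → (#(A ^ e) : ℝ) ≤ K ^ 3 * #A := by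
    intro e he
    have h1 : (#(A ^ e) : ℝ) ≤ #(A ^ e * A ^ (1 : ℤ)) := by
      exact_mod_cast Finset.card_le_card_mul_right (hzne 1 (by norm_num))
    exact h1.trans (lem2 he (by norm_num))
  have lem0 : (1 : ℝ) ≤ K ^ 3 * #A := by
    have h2 : (1 : ℝ) ≤ #A := by exact_mod_cast Finset.card_pos.2 hA₀
    have h3 : (1 : ℝ) ≤ K ^ 3 := one_le_pow₀ hK₁
    nlinarith
  fin_cases he <;> fin_cases hd <;> fin_cases hf
  · (try simp only [zpow_zero, mul_one, one_mul, Finset.card_one, Nat.cast_one]); exact key (by norm_num) (by norm_num) (by norm_num)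
  · (try simp only [zpow_zero, mul_one, one_mul, Finset.card_one, Nat.cast_one]); exact lem2 (by norm_num) (by norm_num)
  · (try simp only [zpow_zero, mul_one, one_mul, Finset.card_one, Nat.cast_one]); exact key (by norm_num) (by norm_num) (by norm_num)
  · (try simp only [zpow_zero, mul_one, one_mul, Finset.card_one, Nat.cast_one]); exact lem2 (by norm_num) (by norm_num)
  · (try simp only [zpow_zero, mul_one, one_mul, Finset.card_one, Nat.cast_one]); exact lem1 (by norm_num)
  · (try simp only [zpow_zero, mul_one, one_mul, Finset.card_one, Nat.cast_one]); exact lem2 (by norm_num) (by norm_num)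
  · (try simp only [zpow_zero, mul_one, one_mul, Finset.card_one, Nat.cast_one]); exact key (by norm_num) (by norm_num) (by norm_num)
  · (try simp only [zpow_zero, mul_one, one_mul, Finset.card_one, Nat.cast_one]); exact lem2 (by norm_num) (by norm_num)
  · (try simp only [zpow_zero, mul_one, one_mul, Finset.card_one, Nat.cast_one]); exact key (by norm_num) (by norm_num) (by norm_num)
  · (try simp only [zpow_zero, mul_one, one_mul, Finset.card_one, Nat.cast_one]); exact lem2 (by norm_num) (by norm_num)
  · (try simp only [zpow_zero, mul_one, one_mul, Finset.card_one, Nat.cast_one]); exact lem1 (by norm_num)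
  · (try simp only [zpow_zero, mul_one, one_mul, Finset.card_one, Nat.cast_one]); exact lem2 (by norm_num) (by norm_num)
  · (try simp only [zpow_zero, mul_one, one_mul, Finset.card_one, Nat.cast_one]); exact lem1 (by norm_num)
  · (try simp only [zpow_zero, mul_one, one_mul, Finset.card_one, Nat.cast_one]); exact lem0
  · (try simp only [zpow_zero, mul_one, one_mul, Finset.card_one, Nat.cast_one]); exact lem1 (by norm_num)
  · (try simp only [zpow_zero, mul_one, one_mul, Finset.card_one, Nat.cast_one]); exact lem2 (by norm_num) (by norm_num)
  · (try simp only [zpow_zero, mul_one, one_mul, Finset.card_one, Nat.cast_one]); exact lem1 (by norm_num)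
  · (try simp only [zpow_zero, mul_one, one_mul, Finset.card_one, Nat.cast_one]); exact lem2 (by norm_num) (by norm_num)
  · (try simp only [zpow_zero, mul_one, one_mul, Finset.card_one, Nat.cast_one]); exact key (by norm_num) (by norm_num) (by norm_num)
  · (try simp only [zpow_zero, mul_one, one_mul, Finset.card_one, Nat.cast_one]); exact lem2 (by norm_num) (by norm_num)
  · (try simp only [zpow_zero, mul_one, one_mul, Finset.card_one, Nat.cast_one]); exact key (by norm_num) (by norm_num) (by norm_num)
  · (try simp only [zpow_zero, mul_one, one_mul, Finset.card_one, Nat.cast_one]); exact lem2 (by norm_num) (by norm_num)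
  · (try simp only [zpow_zero, mul_one, one_mul, Finset.card_one, Nat.cast_one]); exact lem1 (by norm_num)
  · (try simp only [zpow_zero, mul_one, one_mul, Finset.card_one, Nat.cast_one]); exact lem2 (by norm_num) (by norm_num)
  · (try simp only [zpow_zero, mul_one, one_mul, Finset.card_one, Nat.cast_one]); exact key (by norm_num) (by norm_num) (by norm_num)
  · (try simp only [zpow_zero, mul_one, one_mul, Finset.card_one, Nat.cast_one]); exact lem2 (by norm_num) (by norm_num)
  · (try simp only [zpow_zero, mul_one, one_mul, Finset.card_one, Nat.cast_one]); exact key (by norm_num) (by norm_num) (by norm_num)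

theorem stmt_1 {G : Type*} [Group G] (A : Set G) (hA : A.Finite) (hne : A.Nonempty)
    (k : ℕ) (hk : 2 < k) :
    (((A ∪ A⁻¹ ∪ {1} : Set G) ^ 3).ncard : ℝ) / (A.ncard : ℝ) ≤
      (3 * ((A * A * A).ncard : ℝ) / (A.ncard : ℝ)) ^ 3 := by
  classical
  set A' : Finset G := hA.toFinset with hA'def
  have hcoe : (A' : Set G) = A := hA.coe_toFinset
  have hne' : A'.Nonempty := by rwa [← Finset.coe_nonempty, hcoe]
  set B : Finset G := A' ∪ A'⁻¹ ∪ {1} with hBdef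
  have hBcoe : (B : Set G) = A ∪ A⁻¹ ∪ {1} := by
    simp [hBdef, hcoe]
  have h1 : ((A ∪ A⁻¹ ∪ {1} : Set G) ^ 3).ncard = #(B ^ 3) := by
    rw [← hBcoe, ← Finset.coe_pow, Set.ncard_coe_finset]
  have h2 : A.ncard = #A' := by rw [← hcoe, Set.ncard_coe_finset]
  have h3 : (A * A * A).ncard = #(A' ^ 3) := by
    rw [← hcoe, ← Finset.coe_mul, ← Finset.coe_mul, Set.ncard_coe_finset]
    rw [pow_succ, pow_succ, pow_one]
  -- key bound
  set K : ℝ := (#(A' ^ 3) : ℝ) / (#A' : ℝ) with hKdef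
  have ha : (0 : ℝ) < #A' := by exact_mod_cast Finset.card_pos.2 hne'
  have hAK : (#(A' ^ 3) : ℝ) ≤ K * #A' := by
    rw [hKdef, div_mul_cancel₀]; exact ne_of_gt ha
  -- every element of B lies in some A'^e, e ∈ {-1,0,1}
  have hBmem : ∀ b ∈ B, ∃ e ∈ ({-1, 0, 1} : Finset ℤ), b ∈ A' ^ e := by
    intro b hb
    simp only [hBdef, Finset.mem_union, Finset.mem_singleton] at hb
    rcases hb with (hb | hb) | hb
    · exact ⟨1, by norm_num, by simpa using hb⟩
    · exact ⟨-1, by norm_num, by simpa using hb⟩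
    · exact ⟨0, by norm_num, by simp [hb]⟩
  -- B^3 is covered by the biUnion over exponent triples
  set s : Finset (ℤ × ℤ × ℤ) :=
    ({-1, 0, 1} : Finset ℤ) ×ˢ ({-1, 0, 1} : Finset ℤ) ×ˢ ({-1, 0, 1} : Finset ℤ) with hsdef
  have hsub : B ^ 3 ⊆ s.biUnion fun p => A' ^ p.1 * A' ^ p.2.1 * A' ^ p.2.2 := by
    intro x hx
    rw [pow_succ, pow_succ, pow_one] at hx
    rw [Finset.mem_mul] at hx
    obtain ⟨y, hy, c, hc, rfl⟩ := hx
    rw [Finset.mem_mul] at hy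
    obtain ⟨a, ha', b, hb, rfl⟩ := hy
    obtain ⟨e, he, hae⟩ := hBmem a ha'
    obtain ⟨d, hd, hbd⟩ := hBmem b hb
    obtain ⟨f, hf, hcf⟩ := hBmem c hc
    refine Finset.mem_biUnion.2 ⟨(e, d, f), ?_, ?_⟩
    · simp [hsdef, he, hd, hf]
    · exact Finset.mul_mem_mul (Finset.mul_mem_mul hae hbd) hcf
  have hcard : (#(B ^ 3) : ℝ) ≤ 27 * (K ^ 3 * #A') := by
    calc (#(B ^ 3) : ℝ)
        ≤ #(s.biUnion fun p => A' ^ p.1 * A' ^ p.2.1 * A' ^ p.2.2) := by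
          exact_mod_cast Finset.card_le_card hsub
      _ ≤ ∑ p ∈ s, (#(A' ^ p.1 * A' ^ p.2.1 * A' ^ p.2.2) : ℝ) := by
          exact_mod_cast Finset.card_biUnion_le
      _ ≤ ∑ _p ∈ s, K ^ 3 * (#A' : ℝ) := by
          refine Finset.sum_le_sum fun p hp => ?_
          simp only [hsdef, Finset.mem_product] at hp
          exact tri_bound' hne' hAK hp.1 hp.2.1 hp.2.2
      _ = 27 * (K ^ 3 * #A') := by
          rw [Finset.sum_const]
          norm_num [hsdef]
  -- finish with algebra
  rw [h1, h2, h3]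
  set a : ℝ := (#A' : ℝ)
  set c : ℝ := (#(A' ^ 3) : ℝ)
  have hexp : K ^ 3 = c ^ 3 / a ^ 3 := by rw [hKdef, div_pow]
  rw [hexp] at hcard
  have hrhs : (3 * c / a) ^ 3 = 27 * c ^ 3 / a ^ 3 := by
    rw [div_pow, mul_pow]; norm_num
  rw [hrhs, div_le_div_iff₀ ha (by positivity)]
  have h4 : 27 * (c ^ 3 / a ^ 3 * a) * a ^ 3 = 27 * c ^ 3 * a := by
    field_simp
  calc (#(B ^ 3) : ℝ) * a ^ 3 ≤ 27 * (c ^ 3 / a ^ 3 * a) * a ^ 3 :=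
        mul_le_mul_of_nonneg_right hcard (by positivity)
    _ = 27 * c ^ 3 * a := h4
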